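/- Let y₁, y₂ ∈ C²([a,b]) form a Markov system, i.e., y₁ > 0 on [a,b] and the Wronskian W(t) = y₁(t)y₂'(t) - y₁'(t)y₂(t) > 0 on [a,b]. Then, setting v₁ = y₁ and v₂ = W/y₁², both v₁ and v₂ are positive on [a,b], and for every u ∈ C²([a,b]) in the span of y₁, y₂ one has v₁v₂ · (1/v₂ · (u/v₁)')' = 0 on [a,b]. -/

import Mathlib

open Set

/-- Pólya factorization for second order operators: if `y₁, y₂` form a Markov system on
`[a,b]` (`y₁ > 0` and the Wronskian `W = y₁y₂' - y₁'y₂ > 0`), then `v₁ = y₁` and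
`v₂ = W/y₁²` are positive on `[a,b]`, and every `u` in the span of `y₁, y₂` satisfies
`v₁ v₂ (1/v₂ (u/v₁)')' = 0` on `[a,b]`. -/
theorem stmt10 (a b : ℝ) (hab : a < b) (y1 y2 : ℝ → ℝ)
    (hy1 : ContDiff ℝ 2 y1) (hy2 : ContDiff ℝ 2 y2)
    (hy1pos : ∀ t ∈ Icc a b, 0 < y1 t)
    (hW : ∀ t ∈ Icc a b, 0 < y1 t * deriv y2 t - deriv y1 t * y2 t) :
    (∀ t ∈ Icc a b, 0 < y1 t) ∧
    (∀ t ∈ Icc a b, 0 < (y1 t * deriv y2 t - deriv y1 t * y2 t) / (y1 t)^2) ∧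
    (∀ c d : ℝ, ∀ t ∈ Icc a b,
      y1 t * ((y1 t * deriv y2 t - deriv y1 t * y2 t) / (y1 t)^2) *
        deriv (fun s => deriv (fun r => (c * y1 r + d * y2 r) / y1 r) s /
          ((y1 s * deriv y2 s - deriv y1 s * y2 s) / (y1 s)^2)) t = 0) := by
  have hd1 : Differentiable ℝ y1 := hy1.differentiable two_ne_zero
  have hd2 : Differentiable ℝ y2 := hy2.differentiable two_ne_zero
  have hc1 : Continuous (deriv y1) := hy1.continuous_deriv one_le_two
  have hc2 : Continuous (deriv y2) := hy2.continuous_deriv one_le_two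
  have hWc : Continuous (fun t => y1 t * deriv y2 t - deriv y1 t * y2 t) :=
    ((hy1.continuous.mul hc2).sub (hc1.mul hy2.continuous))
  have hSopen : IsOpen {t : ℝ | 0 < y1 t ∧ 0 < y1 t * deriv y2 t - deriv y1 t * y2 t} := by
    exact (isOpen_lt continuous_const hy1.continuous).inter (isOpen_lt continuous_const hWc)
  refine ⟨hy1pos, ?_, ?_⟩
  · intro t ht
    exact div_pos (hW t ht) (pow_pos (hy1pos t ht) 2)
  · intro c d t ht
    have htS : t ∈ {t : ℝ | 0 < y1 t ∧ 0 < y1 t * deriv y2 t - deriv y1 t * y2 t} :=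
      ⟨hy1pos t ht, hW t ht⟩
    have hnhds := hSopen.mem_nhds htS
    have heq : (fun s => deriv (fun r => (c * y1 r + d * y2 r) / y1 r) s /
          ((y1 s * deriv y2 s - deriv y1 s * y2 s) / (y1 s)^2))
        =ᶠ[nhds t] fun _ => d := by
      filter_upwards [hnhds] with s hs
      obtain ⟨hspos, hWs⟩ := hs
      have h1 : HasDerivAt y1 (deriv y1 s) s := (hd1 s).hasDerivAt
      have h2 : HasDerivAt y2 (deriv y2 s) s := (hd2 s).hasDerivAt
      have hu : HasDerivAt (fun r => c * y1 r + d * y2 r)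
          (c * deriv y1 s + d * deriv y2 s) s := (h1.const_mul c).add (h2.const_mul d)
      have hq : HasDerivAt (fun r => (c * y1 r + d * y2 r) / y1 r) _ s := hu.div h1 (ne_of_gt hspos)
      rw [hq.deriv]
      have hy1ne : y1 s ≠ 0 := ne_of_gt hspos
      have hWne : y1 s * deriv y2 s - deriv y1 s * y2 s ≠ 0 := ne_of_gt hWs
      field_simp
      have hWne' : -(deriv y1 s * y2 s) + deriv y2 s * y1 s ≠ 0 := by
        intro h; apply hWne; linarith
      linear_combination mul_inv_cancel_right₀ hWne' d
    rw [heq.deriv_eq, deriv_const, mul_zero]
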